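/- For any real number a, any real x, and sequences (a_n), (b_n), the following inversion formula holds: b_n = ∑_{k=0}^{n} C(n,k) [ (1-a)(-x)^k + (a/2)((1-x)^k + (-1-x)^k) ] a_{n-k} for all n ≥ 0 if and only if a_n = ∑_{k=0}^{n} C(n,k) E_{k,a}(x) b_{n-k} for all n ≥ 0. -/

import Mathlib

open Finset

noncomputable def E (a : ℝ) : ℕ → ℝ
  | 0 => 1
  | n + 1 =>
      -a * ∑ k ∈ (Finset.Icc 1 ((n + 1) / 2)).attach,
        ((n + 1).choose (2 * k.1) : ℝ) * E a (n + 1 - 2 * k.1)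
  decreasing_by
    have h := Finset.mem_Icc.mp k.2
    omega

noncomputable def EP (a : ℝ) (n : ℕ) (x : ℝ) : ℝ :=
  ∑ k ∈ Finset.range (n + 1), (n.choose k : ℝ) * E a k * x ^ (n - k)

/-- Binomial convolution of two sequences. -/
noncomputable def cv (f g : ℕ → ℝ) (n : ℕ) : ℝ :=
  ∑ k ∈ Finset.range (n + 1), (n.choose k : ℝ) * f k * g (n - k)

lemma cv_comm (f g : ℕ → ℝ) (n : ℕ) : cv f g n = cv g f n := by
  unfold cv
  rw [← Finset.sum_range_reflect]
  refine Finset.sum_congr rfl fun k hk => ?_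
  have hk' : k ≤ n := by simpa [Nat.lt_succ_iff] using hk
  simp only [Nat.add_sub_cancel]
  rw [Nat.choose_symm hk', Nat.sub_sub_self hk']
  ring

lemma cv_assoc (f g h : ℕ → ℝ) (n : ℕ) :
    cv f (fun m => cv g h m) n = cv (fun m => cv f g m) h n := by
  unfold cv
  simp only [Finset.mul_sum, Finset.sum_mul]
  rw [Finset.sum_sigma', Finset.sum_sigma']
  refine Finset.sum_bij' (fun p _ => ⟨p.1 + p.2, p.1⟩) (fun p _ => ⟨p.2, p.1 - p.2⟩)
    ?_ ?_ ?_ ?_ ?_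
  · rintro ⟨k, j⟩ hp
    simp only [Finset.mem_sigma, Finset.mem_range, Nat.lt_succ_iff] at hp
    exact Finset.mem_sigma.mpr ⟨Finset.mem_range.mpr (by omega : k + j < n + 1),
      Finset.mem_range.mpr (by omega : k < k + j + 1)⟩
  · rintro ⟨m, k⟩ hp
    simp only [Finset.mem_sigma, Finset.mem_range, Nat.lt_succ_iff] at hp
    exact Finset.mem_sigma.mpr ⟨Finset.mem_range.mpr (by omega : k < n + 1),
      Finset.mem_range.mpr (by omega : m - k < n - k + 1)⟩
  · rintro ⟨k, j⟩ hp
    simp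
  · rintro ⟨m, k⟩ hp
    simp only [Finset.mem_sigma, Finset.mem_range, Nat.lt_succ_iff] at hp
    show (⟨k + (m - k), k⟩ : Σ _ : ℕ, ℕ) = ⟨m, k⟩
    rw [show k + (m - k) = m from by omega]
  · rintro ⟨k, j⟩ hp
    simp only [Finset.mem_sigma, Finset.mem_range, Nat.lt_succ_iff] at hp
    obtain ⟨hk, hj⟩ := hp
    dsimp only
    have hchoose : (n.choose (k + j) : ℝ) * ((k + j).choose k : ℝ)
        = (n.choose k : ℝ) * ((n - k).choose j : ℝ) := by
      have h0 := Nat.choose_mul (n := n) (show k ≤ k + j by omega)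
      rw [Nat.add_sub_cancel_left] at h0
      exact_mod_cast h0
    rw [show n - k - j = n - (k + j) from by omega, show k + j - k = j from by omega]
    linear_combination (-(f k * g j * h (n - (k + j)))) * hchoose

lemma cv_pow (x y : ℝ) (n : ℕ) :
    cv (fun k => x ^ k) (fun k => y ^ k) n = (x + y) ^ n := by
  rw [add_pow]
  unfold cv
  refine Finset.sum_congr rfl fun k hk => by ring

lemma EP_eq_cv (a x : ℝ) (n : ℕ) : EP a n x = cv (E a) (fun k => x ^ k) n := rfl

lemma cv_congr_right (f g g' : ℕ → ℝ) (n : ℕ) (h : ∀ m, g m = g' m) :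
    cv f g n = cv f g' n := by
  unfold cv
  exact Finset.sum_congr rfl fun k _ => by rw [h]

lemma cv_shift (a x y : ℝ) (n : ℕ) :
    cv (fun k => y ^ k) (fun m => EP a m x) n = EP a n (x + y) := by
  calc cv (fun k => y ^ k) (fun m => EP a m x) n
      = cv (fun m => cv (E a) (fun k => x ^ k) m) (fun k => y ^ k) n := by
        rw [cv_comm (fun k => y ^ k) (fun m => EP a m x) n]
        rfl
    _ = cv (E a) (fun m => cv (fun k => x ^ k) (fun k => y ^ k) m) n :=
        (cv_assoc (E a) (fun k => x ^ k) (fun k => y ^ k) n).symm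
    _ = cv (E a) (fun k => (x + y) ^ k) n :=
        cv_congr_right _ _ _ n (cv_pow x y)
    _ = EP a n (x + y) := rfl

lemma E_rec (a : ℝ) (m : ℕ) :
    E a (m + 1) = -a * ∑ j ∈ Finset.Icc 1 ((m + 1) / 2),
      ((m + 1).choose (2 * j) : ℝ) * E a (m + 1 - 2 * j) := by
  rw [E]
  congr 1
  exact Finset.sum_attach (Finset.Icc 1 ((m + 1) / 2))
    (fun j => ((m + 1).choose (2 * j) : ℝ) * E a (m + 1 - 2 * j))

lemma EP_zero (a : ℝ) (n : ℕ) : EP a n 0 = E a n := by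
  unfold EP
  rw [Finset.sum_eq_single n]
  · simp
  · intro k hk hne
    have : k < n := by simp only [Finset.mem_range, Nat.lt_succ_iff] at hk; omega
    rw [zero_pow (by omega)]
    ring
  · intro h
    exact absurd (Finset.self_mem_range_succ n) h

lemma EP_parity (a : ℝ) (n : ℕ) :
    EP a n 1 + EP a n (-1)
      = 2 * ∑ j ∈ Finset.range (n / 2 + 1), ((n.choose (2 * j)) : ℝ) * E a (n - 2 * j) := by
  unfold EP
  rw [← Finset.sum_add_distrib]
  have step1 : ∑ k ∈ Finset.range (n + 1),
      ((n.choose k : ℝ) * E a k * 1 ^ (n - k) + (n.choose k : ℝ) * E a k * (-1) ^ (n - k))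
      = ∑ k ∈ Finset.range (n + 1), (n.choose k : ℝ) * E a (n - k) * (1 + (-1) ^ k) := by
    rw [← Finset.sum_range_reflect]
    refine Finset.sum_congr rfl fun k hk => ?_
    have hk' : k ≤ n := by simpa [Nat.lt_succ_iff] using hk
    simp only [Nat.add_sub_cancel]
    rw [Nat.choose_symm hk', Nat.sub_sub_self hk']
    ring
  rw [step1]
  rw [← Finset.sum_filter_of_ne (p := fun k => Even k)
    (by
      intro k _ hne
      by_contra hodd
      apply hne
      have : (-1 : ℝ) ^ k = -1 := Odd.neg_one_pow (Nat.not_even_iff_odd.mp hodd)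
      rw [this]
      ring)]
  rw [Finset.mul_sum]
  refine Finset.sum_nbij' (fun k => k / 2) (fun j => 2 * j) ?_ ?_ ?_ ?_ ?_
  · intro k hk
    simp only [Finset.mem_filter, Finset.mem_range, Nat.lt_succ_iff] at hk
    simp only [Finset.mem_range, Nat.lt_succ_iff]
    omega
  · intro j hj
    simp only [Finset.mem_range, Nat.lt_succ_iff] at hj
    simp only [Finset.mem_filter, Finset.mem_range, Nat.lt_succ_iff]
    exact ⟨by omega, even_two_mul j⟩
  · intro k hk
    simp only [Finset.mem_filter, Finset.mem_range, Nat.lt_succ_iff] at hk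
    obtain ⟨-, he⟩ := hk
    obtain ⟨c, hc⟩ := he
    show 2 * (k / 2) = k
    omega
  · intro j hj
    show 2 * j / 2 = j
    omega
  · intro k hk
    simp only [Finset.mem_filter, Finset.mem_range, Nat.lt_succ_iff] at hk
    obtain ⟨-, he⟩ := hk
    have h2 : 2 * (k / 2) = k := by obtain ⟨c, hc⟩ := he; omega
    rw [h2, Even.neg_one_pow he]
    ring

/-- The key convolution identity: the two kernels are inverse to each other. -/
lemma cv_delta (a x : ℝ) (n : ℕ) :
    cv (fun k => (1 - a) * (-x) ^ k + a / 2 * ((1 - x) ^ k + (-1 - x) ^ k))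
      (fun k => EP a k x) n = if n = 0 then 1 else 0 := by
  have hsplit : cv (fun k => (1 - a) * (-x) ^ k + a / 2 * ((1 - x) ^ k + (-1 - x) ^ k))
      (fun k => EP a k x) n
      = (1 - a) * cv (fun k => (-x) ^ k) (fun k => EP a k x) n
        + a / 2 * (cv (fun k => (1 - x) ^ k) (fun k => EP a k x) n
          + cv (fun k => (-1 - x) ^ k) (fun k => EP a k x) n) := by
    unfold cv
    simp only [mul_add, Finset.mul_sum]
    rw [← Finset.sum_add_distrib, ← Finset.sum_add_distrib]
    refine Finset.sum_congr rfl fun k _ => by ring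
  rw [hsplit, cv_shift, cv_shift, cv_shift]
  rw [show x + -x = 0 by ring, show x + (1 - x) = 1 by ring, show x + (-1 - x) = -1 by ring]
  rw [EP_zero, EP_parity]
  rcases n with - | m
  · simp [E]
  · simp only [Nat.succ_ne_zero, if_false]
    rw [Finset.sum_range_succ']
    simp only [mul_zero, Nat.mul_zero, Nat.choose_zero_right, Nat.cast_one, Nat.sub_zero,
      one_mul]
    have hIcc : ∑ j ∈ Finset.Icc 1 ((m + 1) / 2),
        (((m + 1).choose (2 * j)) : ℝ) * E a (m + 1 - 2 * j)
        = ∑ i ∈ Finset.range ((m + 1) / 2),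
          (((m + 1).choose (2 * (i + 1))) : ℝ) * E a (m + 1 - 2 * (i + 1)) := by
      rw [← Finset.Ico_add_one_right_eq_Icc, Finset.sum_Ico_eq_sum_range]
      refine Finset.sum_congr (by congr 1; try omega) fun i _ => by rw [Nat.add_comm 1 i]
    have hrec := E_rec a m
    rw [hIcc] at hrec
    rw [hrec]
    ring

lemma cv_delta_left (f A : ℕ → ℝ) (n : ℕ)
    (hf : ∀ m, f m = if m = 0 then 1 else 0) : cv f A n = A n := by
  unfold cv
  rw [Finset.sum_eq_single 0]
  · simp [hf 0]
  · intro k hk hne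
    simp [hf k, hne]
  · intro h
    exact absurd (Finset.mem_range.mpr (Nat.succ_pos n)) h

lemma cv_inv (f g : ℕ → ℝ) (A B : ℕ → ℝ)
    (hfg : ∀ m, cv f g m = if m = 0 then 1 else 0)
    (hB : ∀ n, B n = cv f A n) : ∀ n, A n = cv g B n := by
  intro n
  rw [show B = fun m => cv f A m from funext hB, cv_assoc,
    show (fun m => cv g f m) = fun m => if m = 0 then 1 else 0 from
      funext fun m => by rw [cv_comm]; exact hfg m,
    cv_delta_left _ _ _ fun m => rfl]

theorem stmt12 (a x : ℝ) (A B : ℕ → ℝ) :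
    (∀ n : ℕ, B n = ∑ k ∈ Finset.range (n + 1), (n.choose k : ℝ) *
        ((1 - a) * (-x) ^ k + a / 2 * ((1 - x) ^ k + (-1 - x) ^ k)) * A (n - k)) ↔
    (∀ n : ℕ, A n = ∑ k ∈ Finset.range (n + 1), (n.choose k : ℝ) * EP a k x * B (n - k)) := by
  have hfg : ∀ m, cv (fun k => (1 - a) * (-x) ^ k + a / 2 * ((1 - x) ^ k + (-1 - x) ^ k))
      (fun k => EP a k x) m = if m = 0 then 1 else 0 := cv_delta a x
  have hgf : ∀ m, cv (fun k => EP a k x)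
      (fun k => (1 - a) * (-x) ^ k + a / 2 * ((1 - x) ^ k + (-1 - x) ^ k)) m
      = if m = 0 then 1 else 0 := fun m => by rw [cv_comm]; exact hfg m
  constructor
  · intro hB
    exact cv_inv _ _ A B hfg hB
  · intro hA
    exact cv_inv _ _ B A hgf hA
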